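/- Let a, b, a', b' ∈ ℂ satisfy ab = a'b' and a³+b³ = a'³+b'³ (i.e. the two pairs have the same dihedral invariants u = ab and v = a³+b³). Let r₁,…,r₆ be the roots, with multiplicity over ℂ, of x⁶ + ax⁴ + bx² + 1, and let r₁',…,r₆' be the roots of x⁶ + a'x⁴ + b'x² + 1. Then 𝔄(r) = 𝔄(r'), 𝔅(r) = 𝔅(r'), ℭ(r) = ℭ(r') and 𝔇(r) = 𝔇(r'); that is, all Igusa invariants of the genus-2 curves y² = x⁶+ax⁴+bx²+1 and y² = x⁶+a'x⁴+b'x²+1 coincide, so the dihedral invariants (u,v) determine the point in the moduli space. -/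

import Mathlib

/-!
Root-difference invariants `𝔄, 𝔅, ℭ, 𝔇` of a sextic with roots `r 0, …, r 5`,
with sums over partitions of `{1,…,6}` into pairs/triples encoded as normalized
sums over all permutations of `Fin 6` (48 permutations correspond to each pair
partition, 72 to each triple partition, 12 to each (triple partition, bijection)).
-/

noncomputable def invA (r : Fin 6 → ℂ) : ℂ :=
  (1 / 48 : ℂ) * ∑ σ : Equiv.Perm (Fin 6),
    (r (σ 0) - r (σ 1)) ^ 2 * (r (σ 2) - r (σ 3)) ^ 2 * (r (σ 4) - r (σ 5)) ^ 2

noncomputable def tripleTerm (r : Fin 6 → ℂ) (i j k : Fin 6) : ℂ :=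
  (r i - r j) ^ 2 * (r j - r k) ^ 2 * (r k - r i) ^ 2

noncomputable def invB (r : Fin 6 → ℂ) : ℂ :=
  (1 / 72 : ℂ) * ∑ σ : Equiv.Perm (Fin 6),
    tripleTerm r (σ 0) (σ 1) (σ 2) * tripleTerm r (σ 3) (σ 4) (σ 5)

noncomputable def invC (r : Fin 6 → ℂ) : ℂ :=
  (1 / 12 : ℂ) * ∑ σ : Equiv.Perm (Fin 6),
    tripleTerm r (σ 0) (σ 1) (σ 2) * tripleTerm r (σ 3) (σ 4) (σ 5) *
      ((r (σ 0) - r (σ 3)) ^ 2 * (r (σ 1) - r (σ 4)) ^ 2 * (r (σ 2) - r (σ 5)) ^ 2)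

noncomputable def invD (r : Fin 6 → ℂ) : ℂ :=
  ∏ i : Fin 6, ∏ j ∈ Finset.Ioi i, (r i - r j) ^ 2

/-! ### Auxiliary infrastructure -/

open Finset

/-- Auxiliary product over ordered pairs of distinct indices. -/
noncomputable def Dprod (r : Fin 6 → ℂ) : ℂ :=
  ∏ i : Fin 6, ∏ j ∈ ({i}ᶜ : Finset (Fin 6)), (r j - r i)

lemma exists_comp_perm {f g : Fin 6 → ℂ}
    (h : Multiset.map f Finset.univ.val = Multiset.map g Finset.univ.val) :
    ∃ e : Equiv.Perm (Fin 6), g = f ∘ e := by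
  classical
  have hcard : ∀ z : ℂ, Fintype.card {i // g i = z} = Fintype.card {i // f i = z} := by
    intro z
    have hz := congrArg (Multiset.count z) h
    rw [Multiset.count_map, Multiset.count_map] at hz
    rw [Fintype.card_subtype, Fintype.card_subtype]
    simp only [Finset.card_filter, Finset.card, Finset.filter] at *
    simpa [eq_comm] using hz.symm
  have e' : ∀ z, {i // g i = z} ≃ {i // f i = z} := fun z => Fintype.equivOfCardEq (hcard z)
  refine ⟨(Equiv.sigmaFiberEquiv g).symm.trans
    ((Equiv.sigmaCongrRight e').trans (Equiv.sigmaFiberEquiv f)), funext fun i => ?_⟩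
  have h2 := ((e' (g i)) ⟨i, rfl⟩).2
  simpa [Equiv.sigmaFiberEquiv, Equiv.sigmaCongrRight] using h2.symm

lemma roots_eq {s t : Fin 6 → ℂ} (h : ∀ x : ℂ, ∏ i, (x - s i) = ∏ i, (x - t i)) :
    ∃ e : Equiv.Perm (Fin 6), t = s ∘ e := by
  apply exists_comp_perm
  have hpoly : (Multiset.map (fun a => Polynomial.X - Polynomial.C a)
        (Multiset.map s Finset.univ.val)).prod
      = (Multiset.map (fun a => Polynomial.X - Polynomial.C a)
        (Multiset.map t Finset.univ.val)).prod := by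
    apply Polynomial.funext; intro x
    rw [Polynomial.eval_multiset_prod, Polynomial.eval_multiset_prod]
    simp only [Multiset.map_map, Function.comp]
    simpa [Finset.prod] using h x
  have h2 := congrArg Polynomial.roots hpoly
  rwa [Polynomial.roots_multiset_prod_X_sub_C, Polynomial.roots_multiset_prod_X_sub_C] at h2

/-! ### Permutation invariance -/

lemma invA_perm (r : Fin 6 → ℂ) (e : Equiv.Perm (Fin 6)) : invA (r ∘ e) = invA r := by
  unfold invA
  congr 1
  exact Fintype.sum_equiv (Equiv.mulLeft e) _ _ (fun σ => rfl)

lemma invB_perm (r : Fin 6 → ℂ) (e : Equiv.Perm (Fin 6)) : invB (r ∘ e) = invB r := by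
  unfold invB
  congr 1
  exact Fintype.sum_equiv (Equiv.mulLeft e) _ _ (fun σ => rfl)

lemma invC_perm (r : Fin 6 → ℂ) (e : Equiv.Perm (Fin 6)) : invC (r ∘ e) = invC r := by
  unfold invC
  congr 1
  exact Fintype.sum_equiv (Equiv.mulLeft e) _ _ (fun σ => rfl)

lemma Dprod_perm (r : Fin 6 → ℂ) (e : Equiv.Perm (Fin 6)) : Dprod (r ∘ e) = Dprod r := by
  unfold Dprod
  calc ∏ i, ∏ j ∈ ({i}ᶜ : Finset (Fin 6)), ((r ∘ e) j - (r ∘ e) i)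
      = ∏ i, ∏ j ∈ ({e i}ᶜ : Finset (Fin 6)), (r j - r (e i)) := by
        refine Finset.prod_congr rfl fun i _ => ?_
        refine Finset.prod_equiv e (fun j => ?_) (fun j _ => rfl)
        simp
    _ = ∏ i, ∏ j ∈ ({i}ᶜ : Finset (Fin 6)), (r j - r i) :=
        Equiv.prod_comp e (fun m => ∏ j ∈ ({m}ᶜ : Finset (Fin 6)), (r j - r m))

lemma invD_eq_neg_Dprod (r : Fin 6 → ℂ) : invD r = - Dprod r := by
  have h : ∏ i : Fin 6, ∏ j ∈ Finset.Ioi i, ((r j - r i) * (r i - r j)) = Dprod r :=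
    Finset.prod_prod_Ioi_mul_eq_prod_prod_off_diag (f := fun i j => r i - r j)
  have h2 : ∏ i : Fin 6, ∏ j ∈ Finset.Ioi i, ((r j - r i) * (r i - r j))
      = ∏ i : Fin 6, ((-1 : ℂ) ^ (Finset.Ioi i).card * ∏ j ∈ Finset.Ioi i, (r i - r j) ^ 2) := by
    refine Finset.prod_congr rfl fun i _ => ?_
    rw [← Finset.prod_const, ← Finset.prod_mul_distrib]
    exact Finset.prod_congr rfl fun j _ => by ring
  have h3 : ∏ i : Fin 6, ((-1 : ℂ) ^ (Finset.Ioi i).card * ∏ j ∈ Finset.Ioi i, (r i - r j) ^ 2)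
      = (∏ i : Fin 6, (-1 : ℂ) ^ (Finset.Ioi i).card) * invD r := by
    rw [Finset.prod_mul_distrib]; rfl
  have h4 : (∏ i : Fin 6, (-1 : ℂ) ^ (Finset.Ioi i).card) = -1 := by
    rw [Finset.prod_pow_eq_pow_sum, show ∑ i : Fin 6, (Finset.Ioi i).card = 15 from by decide]
    norm_num
  rw [h2, h3, h4] at h
  linear_combination -h

lemma invD_perm (r : Fin 6 → ℂ) (e : Equiv.Perm (Fin 6)) : invD (r ∘ e) = invD r := by
  rw [invD_eq_neg_Dprod, invD_eq_neg_Dprod, Dprod_perm]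

/-! ### Scaling invariance (for sixth roots of unity) -/

lemma tripleTerm_smul (r : Fin 6 → ℂ) (c : ℂ) (i j k : Fin 6) :
    tripleTerm (fun t => c * r t) i j k = c ^ 6 * tripleTerm r i j k := by
  unfold tripleTerm; ring

lemma invA_smul (r : Fin 6 → ℂ) (c : ℂ) (hc : c ^ 6 = 1) :
    invA (fun i => c * r i) = invA r := by
  unfold invA; congr 1
  refine Finset.sum_congr rfl fun σ _ => ?_
  linear_combination ((r (σ 0) - r (σ 1)) ^ 2 * (r (σ 2) - r (σ 3)) ^ 2
    * (r (σ 4) - r (σ 5)) ^ 2) * hc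

lemma invB_smul (r : Fin 6 → ℂ) (c : ℂ) (hc : c ^ 6 = 1) :
    invB (fun i => c * r i) = invB r := by
  unfold invB; congr 1
  refine Finset.sum_congr rfl fun σ _ => ?_
  rw [tripleTerm_smul, tripleTerm_smul]
  linear_combination (c ^ 6 + 1) * tripleTerm r (σ 0) (σ 1) (σ 2)
    * tripleTerm r (σ 3) (σ 4) (σ 5) * hc

lemma invC_smul (r : Fin 6 → ℂ) (c : ℂ) (hc : c ^ 6 = 1) :
    invC (fun i => c * r i) = invC r := by
  unfold invC; congr 1
  refine Finset.sum_congr rfl fun σ _ => ?_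
  rw [tripleTerm_smul, tripleTerm_smul]
  linear_combination ((c ^ 12 + c ^ 6 + 1) * tripleTerm r (σ 0) (σ 1) (σ 2)
    * tripleTerm r (σ 3) (σ 4) (σ 5)
    * ((r (σ 0) - r (σ 3)) ^ 2 * (r (σ 1) - r (σ 4)) ^ 2 * (r (σ 2) - r (σ 5)) ^ 2)) * hc

lemma Dprod_smul (r : Fin 6 → ℂ) (c : ℂ) (hc : c ^ 6 = 1) :
    Dprod (fun i => c * r i) = Dprod r := by
  unfold Dprod
  have step : ∀ i : Fin 6, ∏ j ∈ ({i}ᶜ : Finset (Fin 6)), (c * r j - c * r i)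
      = c ^ 5 * ∏ j ∈ ({i}ᶜ : Finset (Fin 6)), (r j - r i) := by
    intro i
    rw [show (c:ℂ) ^ 5 = ∏ _j ∈ ({i}ᶜ : Finset (Fin 6)), c from by
        rw [Finset.prod_const]; simp [Finset.card_compl],
      ← Finset.prod_mul_distrib]
    exact Finset.prod_congr rfl fun j _ => by ring
  rw [Finset.prod_congr rfl fun i (_ : i ∈ univ) => step i, Finset.prod_mul_distrib,
    Finset.prod_const]
  have : ((c:ℂ) ^ 5) ^ (univ : Finset (Fin 6)).card = 1 := by
    simp only [Finset.card_univ, Fintype.card_fin]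
    linear_combination (c ^ 24 + c ^ 18 + c ^ 12 + c ^ 6 + 1) * hc
  rw [this, one_mul]

lemma invD_smul (r : Fin 6 → ℂ) (c : ℂ) (hc : c ^ 6 = 1) :
    invD (fun i => c * r i) = invD r := by
  rw [invD_eq_neg_Dprod, invD_eq_neg_Dprod, Dprod_smul r c hc]

/-! ### Inversion invariance (when the product of the roots is 1) -/

lemma perm_prod_inv_eq_one {r : Fin 6 → ℂ} (hprod : ∏ i, r i = 1) (σ : Equiv.Perm (Fin 6)) :
    (r (σ 0))⁻¹ * (r (σ 1))⁻¹ * (r (σ 2))⁻¹ * (r (σ 3))⁻¹ * (r (σ 4))⁻¹ * (r (σ 5))⁻¹ = 1 := by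
  have h0 : ∏ i, (r i)⁻¹ = 1 := by rw [Finset.prod_inv_distrib, hprod, inv_one]
  have h1 := Equiv.prod_comp σ (fun i => (r i)⁻¹)
  rw [h0] at h1
  simp only [Fin.prod_univ_six] at h1
  linear_combination h1

lemma tripleTerm_inv (r : Fin 6 → ℂ) (hne : ∀ i, r i ≠ 0) (i j k : Fin 6) :
    tripleTerm (fun t => (r t)⁻¹) i j k
      = tripleTerm r i j k * ((r i)⁻¹ * (r j)⁻¹ * (r k)⁻¹) ^ 4 := by
  unfold tripleTerm
  rw [inv_sub_inv (hne i) (hne j), inv_sub_inv (hne j) (hne k), inv_sub_inv (hne k) (hne i)]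
  field_simp
  ring

lemma invA_inv (r : Fin 6 → ℂ) (hne : ∀ i, r i ≠ 0) (hprod : ∏ i, r i = 1) :
    invA (fun i => (r i)⁻¹) = invA r := by
  unfold invA; congr 1
  refine Finset.sum_congr rfl fun σ _ => ?_
  have hinv := perm_prod_inv_eq_one hprod σ
  simp only []
  rw [inv_sub_inv (hne (σ 0)) (hne (σ 1)), inv_sub_inv (hne (σ 2)) (hne (σ 3)),
    inv_sub_inv (hne (σ 4)) (hne (σ 5))]
  set Q := (r (σ 0))⁻¹ * (r (σ 1))⁻¹ * (r (σ 2))⁻¹ * (r (σ 3))⁻¹ * (r (σ 4))⁻¹ * (r (σ 5))⁻¹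
    with hQ
  field_simp
  linear_combination ((r (σ 0) - r (σ 1)) ^ 2 * (r (σ 2) - r (σ 3)) ^ 2 * (r (σ 4) - r (σ 5)) ^ 2
    * (Q + 1)) * hinv

lemma invB_inv (r : Fin 6 → ℂ) (hne : ∀ i, r i ≠ 0) (hprod : ∏ i, r i = 1) :
    invB (fun i => (r i)⁻¹) = invB r := by
  unfold invB; congr 1
  refine Finset.sum_congr rfl fun σ _ => ?_
  have hinv := perm_prod_inv_eq_one hprod σ
  rw [tripleTerm_inv r hne, tripleTerm_inv r hne]
  set Q := (r (σ 0))⁻¹ * (r (σ 1))⁻¹ * (r (σ 2))⁻¹ * (r (σ 3))⁻¹ * (r (σ 4))⁻¹ * (r (σ 5))⁻¹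
    with hQ
  linear_combination (tripleTerm r (σ 0) (σ 1) (σ 2) * tripleTerm r (σ 3) (σ 4) (σ 5)
    * (Q ^ 3 + Q ^ 2 + Q + 1)) * hinv

lemma invC_inv (r : Fin 6 → ℂ) (hne : ∀ i, r i ≠ 0) (hprod : ∏ i, r i = 1) :
    invC (fun i => (r i)⁻¹) = invC r := by
  unfold invC; congr 1
  refine Finset.sum_congr rfl fun σ _ => ?_
  have hinv := perm_prod_inv_eq_one hprod σ
  rw [tripleTerm_inv r hne, tripleTerm_inv r hne]
  simp only []
  rw [inv_sub_inv (hne (σ 0)) (hne (σ 3)), inv_sub_inv (hne (σ 1)) (hne (σ 4)),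
    inv_sub_inv (hne (σ 2)) (hne (σ 5))]
  set Q := (r (σ 0))⁻¹ * (r (σ 1))⁻¹ * (r (σ 2))⁻¹ * (r (σ 3))⁻¹ * (r (σ 4))⁻¹ * (r (σ 5))⁻¹
    with hQ
  field_simp
  linear_combination (tripleTerm r (σ 0) (σ 1) (σ 2) * tripleTerm r (σ 3) (σ 4) (σ 5)
    * ((r (σ 0) - r (σ 3)) ^ 2 * (r (σ 1) - r (σ 4)) ^ 2 * (r (σ 2) - r (σ 5)) ^ 2)
    * (Q ^ 5 + Q ^ 4 + Q ^ 3 + Q ^ 2 + Q + 1)) * hinv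

lemma Dprod_inv (r : Fin 6 → ℂ) (hne : ∀ i, r i ≠ 0) (hprod : ∏ i, r i = 1) :
    Dprod (fun i => (r i)⁻¹) = Dprod r := by
  have hinv1 : ∏ i, (r i)⁻¹ = 1 := by rw [Finset.prod_inv_distrib, hprod, inv_one]
  have hpow : ∏ i : Fin 6, ((r i)⁻¹) ^ 5 = 1 := by
    rw [Finset.prod_pow, hinv1, one_pow]
  have hcomm : ∀ f : Fin 6 → Fin 6 → ℂ,
      (∏ i : Fin 6, ∏ j ∈ ({i}ᶜ : Finset (Fin 6)), f i j)
        = ∏ j : Fin 6, ∏ i ∈ ({j}ᶜ : Finset (Fin 6)), f i j := by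
    intro f
    refine Finset.prod_comm' fun x y => ?_
    simp [ne_comm, eq_comm]
  unfold Dprod
  calc ∏ i : Fin 6, ∏ j ∈ ({i}ᶜ : Finset (Fin 6)), ((r j)⁻¹ - (r i)⁻¹)
      = ∏ i : Fin 6, ∏ j ∈ ({i}ᶜ : Finset (Fin 6)),
          ((r i - r j) * ((r j)⁻¹ * (r i)⁻¹)) := by
        refine Finset.prod_congr rfl fun i _ => Finset.prod_congr rfl fun j _ => ?_
        rw [inv_sub_inv (hne j) (hne i), div_eq_mul_inv, mul_inv]
    _ = ∏ i : Fin 6, ((∏ j ∈ ({i}ᶜ : Finset (Fin 6)), (r i - r j))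
          * (∏ j ∈ ({i}ᶜ : Finset (Fin 6)), (r j)⁻¹) * ((r i)⁻¹) ^ 5) := by
        refine Finset.prod_congr rfl fun i _ => ?_
        rw [Finset.prod_mul_distrib, Finset.prod_mul_distrib, Finset.prod_const]
        simp [Finset.card_compl, mul_assoc]
    _ = (∏ i : Fin 6, ∏ j ∈ ({i}ᶜ : Finset (Fin 6)), (r i - r j))
          * (∏ i : Fin 6, ∏ j ∈ ({i}ᶜ : Finset (Fin 6)), (r j)⁻¹)
          * (∏ i : Fin 6, ((r i)⁻¹) ^ 5) := by
        rw [Finset.prod_mul_distrib, Finset.prod_mul_distrib]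
    _ = Dprod r := by
        rw [hcomm (fun i j => r i - r j), hcomm (fun i j => (r j)⁻¹), hpow]
        have h2 : ∏ j : Fin 6, ∏ i ∈ ({j}ᶜ : Finset (Fin 6)), (r j)⁻¹ = 1 := by
          have h3 : ∀ j : Fin 6, ∏ _i ∈ ({j}ᶜ : Finset (Fin 6)), (r j)⁻¹ = ((r j)⁻¹) ^ 5 := by
            intro j; rw [Finset.prod_const]; simp [Finset.card_compl]
          rw [Finset.prod_congr rfl fun j _ => h3 j, hpow]
        rw [h2, mul_one, mul_one]
        rfl

lemma invD_inv (r : Fin 6 → ℂ) (hne : ∀ i, r i ≠ 0) (hprod : ∏ i, r i = 1) :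
    invD (fun i => (r i)⁻¹) = invD r := by
  rw [invD_eq_neg_Dprod, invD_eq_neg_Dprod, Dprod_inv r hne hprod]

/-! ### Invariants agree for two root labellings of the same polynomial -/

lemma invs_eq_of_roots (t r' : Fin 6 → ℂ)
    (h : ∀ x : ℂ, ∏ i, (x - t i) = ∏ i, (x - r' i)) :
    invA r' = invA t ∧ invB r' = invB t ∧ invC r' = invC t ∧ invD r' = invD t := by
  obtain ⟨e, he⟩ := roots_eq h
  exact ⟨by rw [he, invA_perm], by rw [he, invB_perm], by rw [he, invC_perm],
    by rw [he, invD_perm]⟩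

/-! ### The dihedral case analysis -/

lemma cube_helper {p q p' q' : ℂ} (h1 : p' ^ 3 = p ^ 3) (h2 : q' ^ 3 = q ^ 3)
    (h3 : p * q = p' * q') :
    ∃ ζ : ℂ, ζ ^ 3 = 1 ∧ p' = ζ * p ∧ q' = ζ ^ 2 * q := by
  by_cases hp : p = 0
  · have hp' : p' = 0 := by
      rw [hp] at h1; simpa [pow_eq_zero_iff] using h1
    by_cases hq : q = 0
    · have hq' : q' = 0 := by
        rw [hq] at h2; simpa [pow_eq_zero_iff] using h2
      exact ⟨1, by norm_num, by simp [hp, hp'], by simp [hq, hq']⟩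
    · have hη : (q' / q) ^ 3 = 1 := by
        rw [div_pow, h2, div_self (pow_ne_zero _ hq)]
      refine ⟨(q' / q) ^ 2, ?_, ?_, ?_⟩
      · calc ((q' / q) ^ 2) ^ 3 = ((q' / q) ^ 3) ^ 2 := by ring
          _ = 1 := by rw [hη]; norm_num
      · simp [hp, hp']
      · have h4 : (q' / q) ^ 4 = q' / q := by
          rw [show (q' / q) ^ 4 = (q' / q) ^ 3 * (q' / q) by ring, hη, one_mul]
        symm
        calc ((q' / q) ^ 2) ^ 2 * q = (q' / q) ^ 4 * q := by ring
          _ = (q' / q) * q := by rw [h4]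
          _ = q' := by field_simp
  · have hζ : (p' / p) ^ 3 = 1 := by
      rw [div_pow, h1, div_self (pow_ne_zero _ hp)]
    have hp' : p' ≠ 0 := by
      intro h0
      rw [h0] at h1
      exact hp (by simpa [pow_eq_zero_iff] using h1.symm)
    refine ⟨p' / p, hζ, by field_simp, ?_⟩
    have e : q' * p ^ 2 = p' ^ 2 * q := by
      apply mul_left_cancel₀ hp'
      linear_combination (-(p ^ 2)) * h3 - q * h1
    rw [div_pow, div_mul_eq_mul_div, eq_div_iff (pow_ne_zero 2 hp)]
    exact e

lemma main_cases (a b a' b' : ℂ) (hu : a * b = a' * b')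
    (hv : a ^ 3 + b ^ 3 = a' ^ 3 + b' ^ 3) :
    (∃ ζ : ℂ, ζ ^ 3 = 1 ∧ a' = ζ * a ∧ b' = ζ ^ 2 * b) ∨
    (∃ ζ : ℂ, ζ ^ 3 = 1 ∧ a' = ζ * b ∧ b' = ζ ^ 2 * a) := by
  have key : (a' ^ 3 - a ^ 3) * (a' ^ 3 - b ^ 3) = 0 := by
    linear_combination (-(a' ^ 3)) * hv + (a ^ 2 * b ^ 2 + a * b * (a' * b') + a' ^ 2 * b' ^ 2) * hu
  rcases mul_eq_zero.mp key with h | h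
  · left
    have h1 : a' ^ 3 = a ^ 3 := by linear_combination h
    have h2 : b' ^ 3 = b ^ 3 := by linear_combination -hv - h1
    exact cube_helper h1 h2 hu
  · right
    have h1 : a' ^ 3 = b ^ 3 := by linear_combination h
    have h2 : b' ^ 3 = a ^ 3 := by linear_combination -hv - h1
    exact cube_helper h1 h2 (by linear_combination hu)

/-- If two pairs `(a,b)` and `(a',b')` have the same dihedral invariants
`u = ab` and `v = a³+b³`, then the root-difference invariants `𝔄, 𝔅, ℭ, 𝔇` of
the sextics `x⁶+ax⁴+bx²+1` and `x⁶+a'x⁴+b'x²+1` coincide: the dihedral invariants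
`(u,v)` determine the point in the moduli space. -/
theorem dihedral_invariants_determine_igusa_invariants
    (a b a' b' : ℂ) (hu : a * b = a' * b') (hv : a ^ 3 + b ^ 3 = a' ^ 3 + b' ^ 3)
    (r r' : Fin 6 → ℂ)
    (hr : ∀ x : ℂ, x ^ 6 + a * x ^ 4 + b * x ^ 2 + 1 = ∏ i, (x - r i))
    (hr' : ∀ x : ℂ, x ^ 6 + a' * x ^ 4 + b' * x ^ 2 + 1 = ∏ i, (x - r' i)) :
    invA r = invA r' ∧ invB r = invB r' ∧ invC r = invC r' ∧ invD r = invD r' := by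
  -- the product of the roots is 1
  have hprod6 : r 0 * r 1 * r 2 * r 3 * r 4 * r 5 = 1 := by
    have h0 := hr 0
    rw [Fin.prod_univ_six] at h0
    linear_combination -h0
  have hprod : ∏ i, r i = 1 := by rw [Fin.prod_univ_six]; exact hprod6
  have hne : ∀ i, r i ≠ 0 := by
    have hne0 : ∏ i, r i ≠ 0 := by rw [hprod]; exact one_ne_zero
    exact fun i => Finset.prod_ne_zero_iff.mp hne0 i (Finset.mem_univ i)
  rcases main_cases a b a' b' hu hv with ⟨ζ, hζ3, ha', hb'⟩ | ⟨ζ, hζ3, ha', hb'⟩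
  · -- case 1: roots of the second sextic are ζ² · rᵢ up to permutation
    have hc : (ζ ^ 2) ^ 6 = 1 := by
      rw [show ((ζ:ℂ) ^ 2) ^ 6 = (ζ ^ 3) ^ 4 from by ring, hζ3, one_pow]
    have hs : ∀ x : ℂ, ∏ i, (x - ζ ^ 2 * r i) = ∏ i, (x - r' i) := by
      intro x
      have h1 : ∏ i, (ζ * (x - ζ ^ 2 * r i)) = ∏ i, (ζ * x - r i) :=
        Finset.prod_congr rfl fun i _ => by linear_combination (-(r i)) * hζ3
      have h2 : ∏ i, (ζ * (x - ζ ^ 2 * r i)) = ζ ^ 6 * ∏ i, (x - ζ ^ 2 * r i) := by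
        rw [Finset.prod_mul_distrib, Finset.prod_const]
        simp [Finset.card_univ]
      have hζ6 : ζ ^ 6 = 1 := by
        rw [show (ζ:ℂ) ^ 6 = (ζ ^ 3) ^ 2 from by ring, hζ3, one_pow]
      calc ∏ i, (x - ζ ^ 2 * r i) = ζ ^ 6 * ∏ i, (x - ζ ^ 2 * r i) := by rw [hζ6, one_mul]
        _ = ∏ i, (ζ * x - r i) := by rw [← h2, h1]
        _ = (ζ * x) ^ 6 + a * (ζ * x) ^ 4 + b * (ζ * x) ^ 2 + 1 := (hr _).symm
        _ = x ^ 6 + a' * x ^ 4 + b' * x ^ 2 + 1 := by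
            rw [ha', hb']
            linear_combination ((ζ ^ 3 + 1) * x ^ 6 + a * x ^ 4 * ζ) * hζ3
        _ = ∏ i, (x - r' i) := hr' x
    obtain ⟨hA, hB, hC, hD⟩ := invs_eq_of_roots (fun i => ζ ^ 2 * r i) r' hs
    exact ⟨(hA.trans (invA_smul r _ hc)).symm, (hB.trans (invB_smul r _ hc)).symm,
      (hC.trans (invC_smul r _ hc)).symm, (hD.trans (invD_smul r _ hc)).symm⟩
  · -- case 2: roots of the second sextic are ζ² · rᵢ⁻¹ up to permutation
    have hc : (ζ ^ 2) ^ 6 = 1 := by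
      rw [show ((ζ:ℂ) ^ 2) ^ 6 = (ζ ^ 3) ^ 4 from by ring, hζ3, one_pow]
    have hs : ∀ x : ℂ, ∏ i, (x - ζ ^ 2 * (r i)⁻¹) = ∏ i, (x - r' i) := by
      intro x
      rcases eq_or_ne x 0 with hx | hx
      · subst hx
        have hL : ∏ i, ((0:ℂ) - ζ ^ 2 * (r i)⁻¹) = (-(ζ ^ 2)) ^ 6 * ∏ i, (r i)⁻¹ := by
          rw [show (fun i => (0:ℂ) - ζ ^ 2 * (r i)⁻¹) = fun i => (-(ζ ^ 2)) * (r i)⁻¹ from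
            funext fun i => by ring]
          rw [Finset.prod_mul_distrib, Finset.prod_const]
          simp [Finset.card_univ]
        have hR := hr' 0
        rw [hL, Finset.prod_inv_distrib, hprod, inv_one, mul_one]
        have : (-(ζ ^ 2) : ℂ) ^ 6 = 1 := by
          rw [show (-(ζ ^ 2) : ℂ) ^ 6 = (ζ ^ 3) ^ 4 from by ring, hζ3, one_pow]
        rw [this]
        rw [← hR]
        norm_num
      · -- x ≠ 0
        have h1 : ∏ i, (x - ζ ^ 2 * (r i)⁻¹) = ∏ i, ((x * r i - ζ ^ 2) * (r i)⁻¹) := by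
          refine Finset.prod_congr rfl fun i _ => ?_
          linear_combination (-x) * mul_inv_cancel₀ (hne i)
        have h2 : ∏ i, ((x * r i - ζ ^ 2) * (r i)⁻¹)
            = (∏ i, (x * r i - ζ ^ 2)) * (∏ i, (r i)⁻¹) := Finset.prod_mul_distrib
        have h3 : ∏ i, (x * r i - ζ ^ 2) = ∏ i, ((-x) * (ζ ^ 2 * x⁻¹ - r i)) := by
          refine Finset.prod_congr rfl fun i _ => ?_
          linear_combination (ζ ^ 2) * mul_inv_cancel₀ hx
        have h4 : ∏ i, ((-x) * (ζ ^ 2 * x⁻¹ - r i)) = (-x) ^ 6 * ∏ i, (ζ ^ 2 * x⁻¹ - r i) := by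
          rw [Finset.prod_mul_distrib, Finset.prod_const]
          simp [Finset.card_univ]
        have h5 := hr (ζ ^ 2 * x⁻¹)
        calc ∏ i, (x - ζ ^ 2 * (r i)⁻¹)
            = (∏ i, (x * r i - ζ ^ 2)) * (∏ i, (r i)⁻¹) := by rw [h1, h2]
          _ = ∏ i, (x * r i - ζ ^ 2) := by
              rw [Finset.prod_inv_distrib, hprod, inv_one, mul_one]
          _ = (-x) ^ 6 * ∏ i, (ζ ^ 2 * x⁻¹ - r i) := by rw [h3, h4]
          _ = (-x) ^ 6 * ((ζ ^ 2 * x⁻¹) ^ 6 + a * (ζ ^ 2 * x⁻¹) ^ 4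
                + b * (ζ ^ 2 * x⁻¹) ^ 2 + 1) := by rw [← h5]
          _ = x ^ 6 + a' * x ^ 4 + b' * x ^ 2 + 1 := by
              rw [ha', hb']
              field_simp
              linear_combination ((ζ ^ 9 + ζ ^ 6 + ζ ^ 3 + 1)
                + x ^ 2 * a * ζ ^ 2 * (ζ ^ 3 + 1) + x ^ 4 * b * ζ) * hζ3
          _ = ∏ i, (x - r' i) := hr' x
    obtain ⟨hA, hB, hC, hD⟩ := invs_eq_of_roots (fun i => ζ ^ 2 * (r i)⁻¹) r' hs
    have eA : invA (fun i => ζ ^ 2 * (r i)⁻¹) = invA r :=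
      (invA_smul (fun i => (r i)⁻¹) _ hc).trans (invA_inv r hne hprod)
    have eB : invB (fun i => ζ ^ 2 * (r i)⁻¹) = invB r :=
      (invB_smul (fun i => (r i)⁻¹) _ hc).trans (invB_inv r hne hprod)
    have eC : invC (fun i => ζ ^ 2 * (r i)⁻¹) = invC r :=
      (invC_smul (fun i => (r i)⁻¹) _ hc).trans (invC_inv r hne hprod)
    have eD : invD (fun i => ζ ^ 2 * (r i)⁻¹) = invD r :=
      (invD_smul (fun i => (r i)⁻¹) _ hc).trans (invD_inv r hne hprod)
    exact ⟨(hA.trans eA).symm, (hB.trans eB).symm, (hC.trans eC).symm, (hD.trans eD).symm⟩
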